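/- Let φ_p be as below with composition property: for a, b ≥ 0, λ > 0, and r = min{p,2} with p > 1, φ_p(aλ) + φ_p(bλ) ≤ φ_p(λ (a^r + b^r)^{1/r}). -/

import Mathlib

open MeasureTheory Real Filter

noncomputable def phi (p x : ℝ) : ℝ :=
  if |x| ≤ 1 then x ^ 2 / 2 else |x| ^ p / p - 1 / p + 1 / 2

noncomputable def gam (r c d : ℝ) : ℝ :=
  c ^ 2 / (2 * d) * (r * (2 * (d / c) ^ 2 + 1 / r - 1 / 2)) ^ (1 / r)

lemma phi_eq_low {p x : ℝ} (hx0 : 0 ≤ x) (hx : x ≤ 1) : phi p x = x ^ 2 / 2 := by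
  rw [phi, if_pos]; rwa [abs_of_nonneg hx0]

lemma phi_eq_high {p x : ℝ} (hx0 : 0 ≤ x) (hx : 1 < x) :
    phi p x = x ^ p / p - 1 / p + 1 / 2 := by
  rw [phi, if_neg, abs_of_nonneg hx0]
  rw [abs_of_nonneg hx0]; linarith

lemma sq_eq_rpow (x : ℝ) : x ^ (2 : ℕ) = x ^ (2 : ℝ) := by
  rw [show (2:ℝ) = ((2:ℕ):ℝ) by norm_num, Real.rpow_natCast]

lemma bern {x y q : ℝ} (hx : 0 ≤ x) (hy : 0 < y) (hq : 1 ≤ q) :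
    y ^ q + q * x * y ^ (q - 1) ≤ (x + y) ^ q := by
  have h1 : (0:ℝ) ≤ x / y := div_nonneg hx hy.le
  have h2 := one_add_mul_self_le_rpow_one_add (by linarith : (-1:ℝ) ≤ x / y) hq
  have hxy : x + y = y * (1 + x / y) := by field_simp; ring
  have h3 : (x + y) ^ q = y ^ q * (1 + x / y) ^ q := by
    rw [hxy, Real.mul_rpow hy.le (by linarith)]
  have h4 : y ^ q * (1 + q * (x / y)) ≤ y ^ q * (1 + x / y) ^ q :=
    mul_le_mul_of_nonneg_left h2 (rpow_nonneg hy.le q)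
  have h5 : y ^ (q - 1) = y ^ q / y := by
    rw [Real.rpow_sub hy, Real.rpow_one]
  calc y ^ q + q * x * y ^ (q - 1) = y ^ q * (1 + q * (x / y)) := by
        rw [h5]; field_simp
    _ ≤ y ^ q * (1 + x / y) ^ q := h4
    _ = (x + y) ^ q := h3.symm

lemma rpow_self_mul {x q : ℝ} (hx : 0 < x) : x ^ q = x * x ^ (q - 1) := by
  have h := Real.rpow_add hx 1 (q - 1)
  rw [Real.rpow_one] at h
  rw [← h]; congr 1; ring

lemma superadd_aux {x y q : ℝ} (hx : 0 ≤ x) (hxy : x ≤ y) (hq : 1 ≤ q) :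
    x ^ q + y ^ q ≤ (x + y) ^ q := by
  rcases hx.eq_or_lt with h0 | h0
  · rw [← h0, Real.zero_rpow (by linarith), zero_add, zero_add]
  · have hy : 0 < y := lt_of_lt_of_le h0 hxy
    have hb := bern (le_of_lt h0) hy hq
    have hmono : x ^ (q - 1) ≤ y ^ (q - 1) :=
      Real.rpow_le_rpow h0.le hxy (by linarith)
    have hxq : x ^ q = x * x ^ (q - 1) := rpow_self_mul h0
    have h2 : x * x ^ (q - 1) ≤ x * y ^ (q - 1) :=
      mul_le_mul_of_nonneg_left hmono h0.le
    have h3 : x * y ^ (q - 1) ≤ q * x * y ^ (q - 1) := by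
      have hnn : 0 ≤ x * y ^ (q - 1) :=
        mul_nonneg h0.le (rpow_nonneg hy.le _)
      nlinarith
    linarith [hxq ▸ (h2.trans h3)]

lemma superadd {x y q : ℝ} (hx : 0 ≤ x) (hy : 0 ≤ y) (hq : 1 ≤ q) :
    x ^ q + y ^ q ≤ (x + y) ^ q := by
  rcases le_total x y with h | h
  · exact superadd_aux hx h hq
  · have := superadd_aux hy h hq
    rw [add_comm (y ^ q), add_comm y x] at this
    exact this

lemma strong_aux {x y q : ℝ} (h1x : 1 ≤ x) (hxy : x ≤ y) (hq : 1 ≤ q) :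
    x ^ q + y ^ q + (q - 1) ≤ (x + y) ^ q := by
  have hx0 : (0:ℝ) < x := by linarith
  have hy0 : (0:ℝ) < y := by linarith
  have hb := bern hx0.le hy0 hq
  have hmono : x ^ (q - 1) ≤ y ^ (q - 1) :=
    Real.rpow_le_rpow hx0.le hxy (by linarith)
  have hxq : x ^ q = x * x ^ (q - 1) := rpow_self_mul hx0
  have hx1q : (1:ℝ) ≤ x ^ (q - 1) := Real.one_le_rpow h1x (by linarith)
  have hy1q : (1:ℝ) ≤ y ^ (q - 1) := Real.one_le_rpow (h1x.trans hxy) (by linarith)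
  -- q * x * y^{q-1} = x*y^{q-1} + (q-1)*x*y^{q-1} ≥ x*x^{q-1} + (q-1)*1
  have h2 : x * x ^ (q - 1) ≤ x * y ^ (q - 1) :=
    mul_le_mul_of_nonneg_left hmono hx0.le
  have h3 : (1:ℝ) ≤ x * y ^ (q - 1) := by nlinarith
  nlinarith [hb, hxq, h2, h3]

lemma strong {x y q : ℝ} (h1x : 1 ≤ x) (h1y : 1 ≤ y) (hq : 1 ≤ q) :
    x ^ q + y ^ q + (q - 1) ≤ (x + y) ^ q := by
  rcases le_total x y with h | h
  · exact strong_aux h1x h hq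
  · have := strong_aux h1y h hq
    rw [add_comm (y ^ q), add_comm y x] at this
    exact this

lemma half_le {S p : ℝ} (hS1 : 1 < S) (h2p : (1:ℝ)/2 ≤ 1/p) :
    S / 2 ≤ S / p - 1 / p + 1 / 2 := by
  have h := mul_nonneg (by linarith : (0:ℝ) ≤ S - 1) (by linarith : (0:ℝ) ≤ 1/p - 1/2)
  have e : (S - 1) * (1/p - 1/2) = S/p - S/2 - 1/p + 1/2 := by ring
  linarith [e ▸ h]

lemma keyA {p u v : ℝ} (hp : 1 < p) (hp2 : p ≤ 2) (hu : 0 ≤ u) (hv : 0 ≤ v) :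
    phi p u + phi p v ≤ phi p ((u ^ p + v ^ p) ^ (1 / p)) := by
  have hp0 : 0 < p := by linarith
  have hSnn : 0 ≤ u ^ p + v ^ p := add_nonneg (rpow_nonneg hu p) (rpow_nonneg hv p)
  set S := u ^ p + v ^ p with hS
  set w := S ^ (1 / p) with hw
  have hw0 : 0 ≤ w := rpow_nonneg hSnn _
  have hwp : w ^ p = S := by rw [hw, one_div, Real.rpow_inv_rpow hSnn hp0.ne']
  have huw : u ≤ w := by
    calc u = (u ^ p) ^ (1 / p) := by rw [one_div, Real.rpow_rpow_inv hu hp0.ne']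
      _ ≤ w := Real.rpow_le_rpow (rpow_nonneg hu p)
          (le_add_of_nonneg_right (rpow_nonneg hv p)) (by positivity)
  have hvw : v ≤ w := by
    calc v = (v ^ p) ^ (1 / p) := by rw [one_div, Real.rpow_rpow_inv hv hp0.ne']
      _ ≤ w := Real.rpow_le_rpow (rpow_nonneg hv p)
          (le_add_of_nonneg_left (rpow_nonneg hu p)) (by positivity)
  have h2p : (1:ℝ) / 2 ≤ 1 / p := one_div_le_one_div_of_le hp0 hp2
  have sqle : ∀ x : ℝ, 0 ≤ x → x ≤ 1 → x ^ (2:ℝ) ≤ x ^ p := by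
    intro x hx hx1
    rcases hx.eq_or_lt with h0 | h0
    · rw [← h0, Real.zero_rpow (by norm_num), Real.zero_rpow hp0.ne']
    · exact Real.rpow_le_rpow_of_exponent_ge h0 hx1 hp2
  rcases le_or_gt w 1 with hw1 | hw1
  · have hu1 : u ≤ 1 := huw.trans hw1
    have hv1 : v ≤ 1 := hvw.trans hw1
    rw [phi_eq_low hu hu1, phi_eq_low hv hv1, phi_eq_low hw0 hw1,
        sq_eq_rpow u, sq_eq_rpow v, sq_eq_rpow w]
    have hq : (1:ℝ) ≤ 2 / p := by rw [le_div_iff₀ hp0]; linarith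
    have h1 := superadd (rpow_nonneg hu p) (rpow_nonneg hv p) hq
    have e1 : (u ^ p) ^ ((2:ℝ) / p) = u ^ (2:ℝ) := by
      rw [← Real.rpow_mul hu]; congr 1; field_simp
    have e2 : (v ^ p) ^ ((2:ℝ) / p) = v ^ (2:ℝ) := by
      rw [← Real.rpow_mul hv]; congr 1; field_simp
    have e3 : w ^ (2:ℝ) = S ^ ((2:ℝ) / p) := by
      rw [hw, ← Real.rpow_mul hSnn]; congr 1; field_simp
    rw [e1, e2] at h1
    rw [e3]
    linarith
  · rw [phi_eq_high hw0 hw1, hwp]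
    have hS1 : 1 < S := by
      rw [← hwp]
      exact (Real.one_lt_rpow_iff_of_pos (by linarith)).mpr (Or.inl ⟨hw1, hp0⟩)
    rcases le_or_gt u 1 with hu1 | hu1 <;> rcases le_or_gt v 1 with hv1 | hv1
    · rw [phi_eq_low hu hu1, phi_eq_low hv hv1, sq_eq_rpow u, sq_eq_rpow v]
      have h1 := sqle u hu hu1
      have h2 := sqle v hv hv1
      have h3 : S / 2 ≤ S / p - 1 / p + 1 / 2 := half_le hS1 h2p
      have h4 : u ^ (2:ℝ) / 2 + v ^ (2:ℝ) / 2 ≤ S / 2 := by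
        rw [hS]; linarith
      linarith
    · rw [phi_eq_low hu hu1, phi_eq_high hv hv1, sq_eq_rpow u]
      have h1 := sqle u hu hu1
      have h3 := mul_le_mul_of_nonneg_left h2p (rpow_nonneg hu p)
      have hsplit : (u ^ p + v ^ p) / p = u ^ p / p + v ^ p / p := add_div _ _ _
      rw [hsplit]
      have : u ^ (2:ℝ) / 2 ≤ u ^ p / p := by
        calc u ^ (2:ℝ) / 2 ≤ u ^ p / 2 := by linarith
          _ = u ^ p * (1/2) := by ring
          _ ≤ u ^ p * (1/p) := h3
          _ = u ^ p / p := by ring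
      linarith
    · rw [phi_eq_high hu hu1, phi_eq_low hv hv1, sq_eq_rpow v]
      have h1 := sqle v hv hv1
      have h3 := mul_le_mul_of_nonneg_left h2p (rpow_nonneg hv p)
      have hsplit : (u ^ p + v ^ p) / p = u ^ p / p + v ^ p / p := add_div _ _ _
      rw [hsplit]
      have : v ^ (2:ℝ) / 2 ≤ v ^ p / p := by
        calc v ^ (2:ℝ) / 2 ≤ v ^ p / 2 := by linarith
          _ = v ^ p * (1/2) := by ring
          _ ≤ v ^ p * (1/p) := h3
          _ = v ^ p / p := by ring
      linarith
    · rw [phi_eq_high hu hu1, phi_eq_high hv hv1]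
      have hsplit : (u ^ p + v ^ p) / p = u ^ p / p + v ^ p / p := add_div _ _ _
      rw [hsplit]
      linarith

lemma keyB {p u v : ℝ} (hp2 : 2 < p) (hu : 0 ≤ u) (hv : 0 ≤ v) :
    phi p u + phi p v ≤ phi p ((u ^ (2:ℝ) + v ^ (2:ℝ)) ^ (1 / (2:ℝ))) := by
  have hp0 : 0 < p := by linarith
  have hq1 : (1:ℝ) ≤ p / 2 := by linarith
  have hXnn : 0 ≤ u ^ (2:ℝ) := rpow_nonneg hu _
  have hYnn : 0 ≤ v ^ (2:ℝ) := rpow_nonneg hv _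
  set X := u ^ (2:ℝ) with hX
  set Y := v ^ (2:ℝ) with hY
  have hXYnn : 0 ≤ X + Y := add_nonneg hXnn hYnn
  set w := (X + Y) ^ (1 / (2:ℝ)) with hw
  have hw0 : 0 ≤ w := rpow_nonneg hXYnn _
  have hw2 : w ^ (2:ℝ) = X + Y := by
    rw [hw, one_div, Real.rpow_inv_rpow hXYnn (by norm_num)]
  have huw : u ≤ w := by
    calc u = (u ^ (2:ℝ)) ^ (1 / (2:ℝ)) := by
          rw [one_div, Real.rpow_rpow_inv hu (by norm_num)]
      _ ≤ w := Real.rpow_le_rpow hXnn (le_add_of_nonneg_right hYnn) (by norm_num)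
  have hvw : v ≤ w := by
    calc v = (v ^ (2:ℝ)) ^ (1 / (2:ℝ)) := by
          rw [one_div, Real.rpow_rpow_inv hv (by norm_num)]
      _ ≤ w := Real.rpow_le_rpow hYnn (le_add_of_nonneg_left hXnn) (by norm_num)
  have hup : u ^ p = X ^ (p / 2) := by
    rw [hX, ← Real.rpow_mul hu]; congr 1; ring
  have hvp : v ^ p = Y ^ (p / 2) := by
    rw [hY, ← Real.rpow_mul hv]; congr 1; ring
  have hwp : w ^ p = (X + Y) ^ (p / 2) := by
    rw [hw, ← Real.rpow_mul hXYnn]; congr 1; ring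
  rcases le_or_gt w 1 with hw1 | hw1
  · have hu1 : u ≤ 1 := huw.trans hw1
    have hv1 : v ≤ 1 := hvw.trans hw1
    rw [phi_eq_low hu hu1, phi_eq_low hv hv1, phi_eq_low hw0 hw1,
        sq_eq_rpow u, sq_eq_rpow v, sq_eq_rpow w, hw2, ← hX, ← hY]
    linarith
  · rw [phi_eq_high hw0 hw1, hwp]
    have hXY1 : 1 < X + Y := by
      rw [← hw2]
      exact (Real.one_lt_rpow_iff_of_pos (by linarith)).mpr (Or.inl ⟨hw1, by norm_num⟩)
    rcases le_or_gt u 1 with hu1 | hu1 <;> rcases le_or_gt v 1 with hv1 | hv1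
    · -- X, Y ≤ 1, X+Y > 1
      rw [phi_eq_low hu hu1, phi_eq_low hv hv1, sq_eq_rpow u, sq_eq_rpow v, ← hX, ← hY]
      have hb := bern (by linarith : (0:ℝ) ≤ X + Y - 1) one_pos hq1
      rw [Real.one_rpow, Real.one_rpow, mul_one] at hb
      rw [show X + Y - 1 + 1 = X + Y by ring] at hb
      have h1 : ((X + Y) / 2 - 1 / 2) * p ≤ (X + Y) ^ (p / 2) - 1 := by linarith
      have h2 : (X + Y) / 2 - 1 / 2 ≤ ((X + Y) ^ (p / 2) - 1) / p :=
        (le_div_iff₀ hp0).mpr h1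
      have h3 : ((X + Y) ^ (p / 2) - 1) / p = (X + Y) ^ (p / 2) / p - 1 / p :=
        sub_div _ _ _
      linarith
    · -- u ≤ 1 < v
      rw [phi_eq_low hu hu1, phi_eq_high hv hv1, hvp, sq_eq_rpow u, ← hX]
      have hY1 : (1:ℝ) ≤ Y := Real.one_le_rpow hv1.le (by norm_num)
      have hb := bern hXnn (by linarith : (0:ℝ) < Y) hq1
      have hYq : (1:ℝ) ≤ Y ^ (p / 2 - 1) := Real.one_le_rpow hY1 (by linarith)
      have h5 : p / 2 * X ≤ p / 2 * X * Y ^ (p / 2 - 1) := by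
        nlinarith [mul_nonneg (mul_nonneg (by linarith : (0:ℝ) ≤ p / 2) hXnn)
          (by linarith : (0:ℝ) ≤ Y ^ (p / 2 - 1) - 1)]
      have h6 : X / 2 * p ≤ (X + Y) ^ (p / 2) - Y ^ (p / 2) := by linarith
      have h7 : X / 2 ≤ ((X + Y) ^ (p / 2) - Y ^ (p / 2)) / p :=
        (le_div_iff₀ hp0).mpr h6
      have h8 : ((X + Y) ^ (p / 2) - Y ^ (p / 2)) / p
          = (X + Y) ^ (p / 2) / p - Y ^ (p / 2) / p := sub_div _ _ _
      linarith
    · -- v ≤ 1 < u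
      rw [phi_eq_high hu hu1, phi_eq_low hv hv1, hup, sq_eq_rpow v, ← hY]
      have hX1 : (1:ℝ) ≤ X := Real.one_le_rpow hu1.le (by norm_num)
      have hb := bern hYnn (by linarith : (0:ℝ) < X) hq1
      rw [show Y + X = X + Y by ring] at hb
      have hXq : (1:ℝ) ≤ X ^ (p / 2 - 1) := Real.one_le_rpow hX1 (by linarith)
      have h5 : p / 2 * Y ≤ p / 2 * Y * X ^ (p / 2 - 1) := by
        nlinarith [mul_nonneg (mul_nonneg (by linarith : (0:ℝ) ≤ p / 2) hYnn)
          (by linarith : (0:ℝ) ≤ X ^ (p / 2 - 1) - 1)]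
      have h6 : Y / 2 * p ≤ (X + Y) ^ (p / 2) - X ^ (p / 2) := by linarith
      have h7 : Y / 2 ≤ ((X + Y) ^ (p / 2) - X ^ (p / 2)) / p :=
        (le_div_iff₀ hp0).mpr h6
      have h8 : ((X + Y) ^ (p / 2) - X ^ (p / 2)) / p
          = (X + Y) ^ (p / 2) / p - X ^ (p / 2) / p := sub_div _ _ _
      linarith
    · -- 1 < u, 1 < v
      rw [phi_eq_high hu hu1, phi_eq_high hv hv1, hup, hvp]
      have hX1 : (1:ℝ) ≤ X := Real.one_le_rpow hu1.le (by norm_num)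
      have hY1 : (1:ℝ) ≤ Y := Real.one_le_rpow hv1.le (by norm_num)
      have hs := strong hX1 hY1 hq1
      have h1 := (div_le_div_iff_of_pos_right hp0).mpr hs
      have e : (X ^ (p / 2) + Y ^ (p / 2) + (p / 2 - 1)) / p
          = X ^ (p / 2) / p + Y ^ (p / 2) / p + (1 / 2 - 1 / p) := by
        field_simp
      linarith [e ▸ h1]

theorem stmt_16 (p a b l : ℝ) (hp : 1 < p) (ha : 0 ≤ a) (hb : 0 ≤ b) (hl : 0 < l) :
    phi p (a * l) + phi p (b * l) ≤
      phi p (l * (a ^ min p 2 + b ^ min p 2) ^ (1 / min p 2)) := by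
  rcases le_or_gt p 2 with hp2 | hp2
  · rw [min_eq_left hp2]
    have hW : l * (a ^ p + b ^ p) ^ (1 / p) = ((a * l) ^ p + (b * l) ^ p) ^ (1 / p) := by
      rw [Real.mul_rpow ha hl.le, Real.mul_rpow hb hl.le,
        show a ^ p * l ^ p + b ^ p * l ^ p = (a ^ p + b ^ p) * l ^ p by ring,
        Real.mul_rpow (add_nonneg (rpow_nonneg ha p) (rpow_nonneg hb p))
          (rpow_nonneg hl.le p),
        one_div, Real.rpow_rpow_inv hl.le (by linarith : p ≠ 0)]
      ring
    rw [hW]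
    exact keyA hp hp2 (mul_nonneg ha hl.le) (mul_nonneg hb hl.le)
  · rw [min_eq_right hp2.le]
    have hW : l * (a ^ (2:ℝ) + b ^ (2:ℝ)) ^ (1 / (2:ℝ))
        = ((a * l) ^ (2:ℝ) + (b * l) ^ (2:ℝ)) ^ (1 / (2:ℝ)) := by
      rw [Real.mul_rpow ha hl.le, Real.mul_rpow hb hl.le,
        show a ^ (2:ℝ) * l ^ (2:ℝ) + b ^ (2:ℝ) * l ^ (2:ℝ)
          = (a ^ (2:ℝ) + b ^ (2:ℝ)) * l ^ (2:ℝ) by ring,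
        Real.mul_rpow (add_nonneg (rpow_nonneg ha _) (rpow_nonneg hb _))
          (rpow_nonneg hl.le _),
        one_div, Real.rpow_rpow_inv hl.le (by norm_num : (2:ℝ) ≠ 0)]
      ring
    rw [hW]
    exact keyB hp2 (mul_nonneg ha hl.le) (mul_nonneg hb hl.le)
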